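/- Let f₁,…,f_s be nonzero polynomials in K[x₁,…,xₙ] with deg(fᵢ) = δᵢ, and suppose (f₁ᵗ,…,f_sᵗ) is a regular sequence. Let d ∈ ℕ. If w = q₁f₁ + ⋯ + q_s f_s with deg(w) < d and deg(qᵢ) ≤ d − δᵢ for all i, then there exist h₁,…,h_s with deg(hᵢ) < d − δᵢ and w = h₁f₁ + ⋯ + h_s f_s. -/

import Mathlib

open MvPolynomial

/-- The homogeneous component of highest degree of a polynomial. -/
noncomputable def topHom {K : Type*} [Field K] {n : ℕ} (f : MvPolynomial (Fin n) K) :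
    MvPolynomial (Fin n) K :=
  MvPolynomial.homogeneousComponent f.totalDegree f

namespace StmtAux
variable {σ : Type*} {R : Type*} [CommRing R]

lemma totalDegree_eq_sup_degree (p : MvPolynomial σ R) :
    p.totalDegree = p.support.sup (fun m => m.degree) := by
  simp [totalDegree, Finsupp.degree, Finsupp.sum]; rfl

lemma degree_le_totalDegree {p : MvPolynomial σ R} {m : σ →₀ ℕ}
    (h : m ∈ p.support) : m.degree ≤ p.totalDegree := by
  rw [totalDegree_eq_sup_degree]; exact Finset.le_sup h

lemma dltδ_iff (p : MvPolynomial σ R) (e d : ℕ) :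
    (p = 0 ∨ p.totalDegree + e < d) ↔
      ∀ m : σ →₀ ℕ, d ≤ m.degree + e → coeff m p = 0 := by
  classical
  constructor
  · rintro (rfl | h) m hm
    · simp
    · by_contra hc
      have := degree_le_totalDegree (mem_support_iff.mpr hc)
      omega
  · intro h
    by_cases hp : p = 0
    · exact Or.inl hp
    · right
      obtain ⟨m, hm, hdeg⟩ := p.support.exists_mem_eq_sup
        (Finset.nonempty_iff_ne_empty.mpr (mt MvPolynomial.support_eq_empty.mp hp)) (fun m => m.degree)
      have hd2 : p.totalDegree = m.degree := by
        rw [totalDegree_eq_sup_degree, hdeg]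
      by_contra hc
      exact (mem_support_iff.mp hm) (h m (by omega))

lemma dleδ_iff (p : MvPolynomial σ R) (e d : ℕ) :
    (p = 0 ∨ p.totalDegree + e ≤ d) ↔
      ∀ m : σ →₀ ℕ, d < m.degree + e → coeff m p = 0 := by
  classical
  constructor
  · rintro (rfl | h) m hm
    · simp
    · by_contra hc
      have := degree_le_totalDegree (mem_support_iff.mpr hc)
      omega
  · intro h
    by_cases hp : p = 0
    · exact Or.inl hp
    · right
      obtain ⟨m, hm, hdeg⟩ := p.support.exists_mem_eq_sup
        (Finset.nonempty_iff_ne_empty.mpr (mt MvPolynomial.support_eq_empty.mp hp)) (fun m => m.degree)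
      have hd2 : p.totalDegree = m.degree := by
        rw [totalDegree_eq_sup_degree, hdeg]
      by_contra hc
      exact (mem_support_iff.mp hm) (h m (by omega))

lemma dlt_iff (p : MvPolynomial σ R) (d : ℕ) :
    (p = 0 ∨ p.totalDegree < d) ↔ ∀ m : σ →₀ ℕ, d ≤ m.degree → coeff m p = 0 := by
  have := dltδ_iff p 0 d
  simpa using this

lemma dlt_sum {ι : Type*} (t : Finset ι) (p : ι → MvPolynomial σ R) (d : ℕ)
    (h : ∀ i ∈ t, p i = 0 ∨ (p i).totalDegree < d) :
    (∑ i ∈ t, p i) = 0 ∨ (∑ i ∈ t, p i).totalDegree < d := by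
  rw [dlt_iff]
  intro m hm
  rw [coeff_sum]
  exact Finset.sum_eq_zero fun i hi => (dlt_iff _ _).mp (h i hi) m hm

lemma dlt_sub (p g : MvPolynomial σ R) (d : ℕ)
    (hp : p = 0 ∨ p.totalDegree < d) (hg : g = 0 ∨ g.totalDegree < d) :
    (p - g) = 0 ∨ (p - g).totalDegree < d := by
  rw [dlt_iff] at *
  intro m hm
  rw [coeff_sub, hp m hm, hg m hm, sub_zero]

lemma dlt_mul_le (p g : MvPolynomial σ R) (a b : ℕ)
    (hp : p.totalDegree ≤ a) (hg : g = 0 ∨ g.totalDegree < b) :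
    (p * g) = 0 ∨ (p * g).totalDegree < a + b := by
  rcases hg with rfl | hg
  · left; rw [mul_zero]
  by_cases hp0 : p = 0
  · left; rw [hp0, zero_mul]
  right
  calc (p * g).totalDegree ≤ p.totalDegree + g.totalDegree := totalDegree_mul p g
    _ < a + b := by omega

lemma homogeneousComponent_mul_right (a g : MvPolynomial σ R) (e D : ℕ)
    (hg : g.IsHomogeneous e) :
    homogeneousComponent D (a * g) =
      if e ≤ D then homogeneousComponent (D - e) a * g else 0 := by
  classical
  conv_lhs => rw [← sum_homogeneousComponent a]
  rw [Finset.sum_mul, map_sum]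
  have key : ∀ i, homogeneousComponent D (homogeneousComponent i a * g) =
      if D = i + e then homogeneousComponent i a * g else 0 := fun i =>
    homogeneousComponent_of_mem ((homogeneousComponent_isHomogeneous i a).mul hg)
  simp_rw [key]
  by_cases he : e ≤ D
  · rw [if_pos he]
    have hcond : ∀ x, (D = x + e) ↔ (x = D - e) := fun x => by omega
    simp only [hcond]
    rw [Finset.sum_ite_eq' (Finset.range (a.totalDegree + 1)) (D - e)
      (fun x => homogeneousComponent x a * g)]
    by_cases hr : D - e ∈ Finset.range (a.totalDegree + 1)
    · rw [if_pos hr]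
    · rw [if_neg hr]
      have : homogeneousComponent (D - e) a = 0 :=
        homogeneousComponent_eq_zero a (n := D - e) (by
          simp only [Finset.mem_range] at hr; omega)
      rw [this, zero_mul]
  · rw [if_neg he]
    exact Finset.sum_eq_zero fun i _ => by rw [if_neg (by omega)]

lemma sub_top_dlt (p : MvPolynomial σ R) :
    p - homogeneousComponent p.totalDegree p = 0 ∨
      (p - homogeneousComponent p.totalDegree p).totalDegree < p.totalDegree := by
  rw [dlt_iff]
  intro m hm
  rw [coeff_sub, coeff_homogeneousComponent]
  rcases eq_or_lt_of_le hm with h | h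
  · rw [if_pos h.symm, sub_self]
  · rw [if_neg (by omega), sub_zero]
    exact (dlt_iff p (p.totalDegree + 1)).mp (Or.inr (by omega)) m (by omega)

lemma comp_eq_zero_of_dlt (p : MvPolynomial σ R) (d : ℕ)
    (h : p = 0 ∨ p.totalDegree < d) : homogeneousComponent d p = 0 := by
  rcases h with h | h
  · rw [h, map_zero]
  · exact homogeneousComponent_eq_zero (n := d) p h

lemma main_aux {K : Type*} [Field K] {n s : ℕ}
    (f : Fin s → MvPolynomial (Fin n) K) (δ : Fin s → ℕ)
    (hf0 : ∀ i, f i ≠ 0) (hdeg : ∀ i, (f i).totalDegree = δ i)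
    (hreg : ∀ i : Fin s, ∀ g : MvPolynomial (Fin n) K,
      g * topHom (f i) ∈ Ideal.span {p | ∃ j : Fin s, j < i ∧ p = topHom (f j)} →
      g ∈ Ideal.span {p | ∃ j : Fin s, j < i ∧ p = topHom (f j)})
    (d : ℕ) (w : MvPolynomial (Fin n) K)
    (hwd : w = 0 ∨ w.totalDegree < d) :
    ∀ m : ℕ, ∀ q : Fin s → MvPolynomial (Fin n) K,
      w = ∑ i, q i * f i →
      (∀ i, q i = 0 ∨ (q i).totalDegree + δ i ≤ d) →
      (∀ j : Fin s, m ≤ j.val → q j = 0 ∨ (q j).totalDegree + δ j < d) →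
      ∃ h : Fin s → MvPolynomial (Fin n) K,
        w = ∑ i, h i * f i ∧ ∀ i, h i = 0 ∨ (h i).totalDegree + δ i < d := by
  classical
  intro m
  induction m with
  | zero => exact fun q hw _ hstrict => ⟨q, hw, fun i => hstrict i (Nat.zero_le _)⟩
  | succ m IH =>
    intro q hw hq hstrict
    by_cases hms : m < s
    swap
    · exact IH q hw hq (fun j hj => absurd j.isLt (by omega))
    set i : Fin s := ⟨m, hms⟩ with hidef
    by_cases hi : q i = 0 ∨ (q i).totalDegree + δ i < d
    · refine IH q hw hq (fun j hj => ?_)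
      rcases eq_or_lt_of_le hj with h | h
      · have : j = i := Fin.ext h.symm
        rw [this]; exact hi
      · exact hstrict j h
    -- q i is "tight": deg (q i) + δ i = d
    push_neg at hi
    obtain ⟨hqi0, hqid⟩ := hi
    have hqile : (q i).totalDegree + δ i ≤ d := (hq i).resolve_left hqi0
    have htight_i : (q i).totalDegree + δ i = d := le_antisymm hqile hqid
    have hδi : δ i ≤ d := by omega
    set D : ℕ := d - δ i with hD
    have hqiD : (q i).totalDegree = D := by omega
    -- top components of the f's
    have hTf : ∀ j, (topHom (f j)).IsHomogeneous (δ j) := fun j => by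
      rw [topHom, hdeg j]
      exact hdeg j ▸ homogeneousComponent_isHomogeneous _ _
    have hTf_of : ∀ j, topHom (f j) = homogeneousComponent (δ j) (f j) := fun j => by
      rw [topHom, hdeg j]
    have hTfsub : ∀ j, f j - topHom (f j) = 0 ∨ (f j - topHom (f j)).totalDegree < δ j :=
      fun j => by rw [topHom]; exact hdeg j ▸ sub_top_dlt (f j)
    have hTq_le : ∀ p : MvPolynomial (Fin n) K, (topHom p).totalDegree ≤ p.totalDegree :=
      fun p => (homogeneousComponent_isHomogeneous _ _).totalDegree_le
    have him : (i : ℕ) = m := rfl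
    set tight : Fin s → Prop := fun j => q j ≠ 0 ∧ (q j).totalDegree + δ j = d with htight
    have claim1 : ∀ j, homogeneousComponent d (q j * f j) =
        if tight j then topHom (q j) * topHom (f j) else 0 := by
      intro j
      by_cases ht : tight j
      · rw [if_pos ht]
        obtain ⟨ht1, ht2⟩ := ht
        have hdecomp : q j * f j = topHom (q j) * topHom (f j) +
            (topHom (q j) * (f j - topHom (f j)) + f j * (q j - topHom (q j))) := by
          ring
        rw [hdecomp, map_add, map_add]
        have hh : (topHom (q j) * topHom (f j)).IsHomogeneous d := by
          have := (homogeneousComponent_isHomogeneous (q j).totalDegree (q j)).mul (hTf j)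
          rwa [ht2] at this
        have h1 : homogeneousComponent d (topHom (q j) * topHom (f j)) =
            topHom (q j) * topHom (f j) := by
          rw [homogeneousComponent_of_mem hh, if_pos rfl]
        have h2 : homogeneousComponent d (topHom (q j) * (f j - topHom (f j))) = 0 := by
          apply comp_eq_zero_of_dlt
          rcases dlt_mul_le (topHom (q j)) (f j - topHom (f j)) ((q j).totalDegree) (δ j)
            (hTq_le (q j)) (hTfsub j) with h | h
          · exact Or.inl h
          · exact Or.inr (by omega)
        have h3 : homogeneousComponent d (f j * (q j - topHom (q j))) = 0 := by
          apply comp_eq_zero_of_dlt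
          rcases dlt_mul_le (f j) (q j - topHom (q j)) (δ j) ((q j).totalDegree)
            (le_of_eq (hdeg j)) (by rw [topHom]; exact sub_top_dlt (q j)) with h | h
          · exact Or.inl h
          · exact Or.inr (by omega)
        rw [h1, h2, h3, add_zero, add_zero]
      · rw [if_neg ht]
        apply comp_eq_zero_of_dlt
        rcases hq j with h0 | hle
        · left; rw [h0, zero_mul]
        by_cases hq0 : q j = 0
        · left; rw [hq0, zero_mul]
        have hne : (q j).totalDegree + δ j ≠ d := fun hcon => ht ⟨hq0, hcon⟩
        have hlt : (q j).totalDegree + δ j < d := lt_of_le_of_ne hle hne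
        rw [mul_comm]
        rcases dlt_mul_le (f j) (q j) (δ j) (d - δ j) (le_of_eq (hdeg j))
          (Or.inr (by omega)) with h | h
        · exact Or.inl h
        · exact Or.inr (by omega)
    -- the span of earlier top forms
    set S : Set (MvPolynomial (Fin n) K) :=
      {p | ∃ j : Fin s, j < i ∧ p = topHom (f j)} with hS
    have claim_sum0 : (0 : MvPolynomial (Fin n) K) =
        ∑ j, if tight j then topHom (q j) * topHom (f j) else 0 := by
      have h0 : homogeneousComponent d w = 0 := comp_eq_zero_of_dlt w d hwd
      calc (0 : MvPolynomial (Fin n) K) = homogeneousComponent d w := h0.symm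
        _ = ∑ j, homogeneousComponent d (q j * f j) := by rw [hw, map_sum]
        _ = ∑ j, if tight j then topHom (q j) * topHom (f j) else 0 :=
            Finset.sum_congr rfl (fun j _ => claim1 j)
    have claim2 : topHom (q i) * topHom (f i) ∈ Ideal.span S := by
      have hsplit : (0 : MvPolynomial (Fin n) K) =
          (if tight i then topHom (q i) * topHom (f i) else 0) +
            ∑ j ∈ Finset.univ.erase i, if tight j then topHom (q j) * topHom (f j) else 0 :=
        claim_sum0.trans (Finset.add_sum_erase Finset.univ
          (fun j => if tight j then topHom (q j) * topHom (f j) else 0)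
          (Finset.mem_univ i)).symm
      rw [if_pos (show tight i from ⟨hqi0, htight_i⟩)] at hsplit
      have heq : topHom (q i) * topHom (f i) =
          -∑ j ∈ Finset.univ.erase i, (if tight j then topHom (q j) * topHom (f j) else 0) :=
        eq_neg_of_add_eq_zero_left hsplit.symm
      rw [heq]
      refine neg_mem (Ideal.sum_mem _ (fun j hj => ?_))
      by_cases htj : tight j
      · rw [if_pos htj]
        have hji : j < i := by
          rcases lt_trichotomy j i with h | h | h
          · exact h
          · exact absurd h (Finset.ne_of_mem_erase hj)
          · exfalso
            have := hstrict j (by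
              have : (i : ℕ) < (j : ℕ) := h
              omega)
            rcases this with h0 | hlt
            · exact htj.1 h0
            · omega
        exact Ideal.mul_mem_left _ _ (Ideal.subset_span ⟨j, hji, rfl⟩)
      · rw [if_neg htj]; exact zero_mem _
    have claim3 : topHom (q i) ∈ Ideal.span S := hreg i _ claim2
    -- extract coefficients
    set F : Fin s → MvPolynomial (Fin n) K :=
      fun j => if j < i then topHom (f j) else 0 with hF
    have hmem : topHom (q i) ∈ Ideal.span (Set.range F) := by
      refine Ideal.span_mono ?_ claim3
      rintro p ⟨j, hj, rfl⟩
      exact ⟨j, by simp only [hF]; rw [if_pos hj]⟩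
    obtain ⟨c, hc⟩ := Ideal.mem_span_range_iff_exists_fun.mp hmem
    set b : Fin s → MvPolynomial (Fin n) K :=
      fun j => if j < i ∧ δ j ≤ D then homogeneousComponent (D - δ j) (c j) else 0 with hb
    have hb_def : ∀ j, b j = if j < i ∧ δ j ≤ D then
        homogeneousComponent (D - δ j) (c j) else 0 := fun j => rfl
    have hbi : b i = 0 := by rw [hb_def, if_neg (by simp)]
    have hb_deg : ∀ j, (b j).totalDegree ≤ D - δ j := by
      intro j
      rw [hb_def]
      by_cases h : j < i ∧ δ j ≤ D
      · rw [if_pos h]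
        exact (homogeneousComponent_isHomogeneous _ _).totalDegree_le
      · rw [if_neg h]; simp
    have hb_zero : ∀ j, ¬(j < i ∧ δ j ≤ D) → b j = 0 := by
      intro j h; rw [hb_def, if_neg h]
    have claim5 : topHom (q i) = ∑ j, b j * topHom (f j) := by
      have hTqi : (topHom (q i)).IsHomogeneous D :=
        hqiD ▸ homogeneousComponent_isHomogeneous (q i).totalDegree (q i)
      calc topHom (q i) = homogeneousComponent D (topHom (q i)) := by
            rw [homogeneousComponent_of_mem hTqi, if_pos rfl]
        _ = homogeneousComponent D (∑ j, c j * F j) := by rw [hc]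
        _ = ∑ j, homogeneousComponent D (c j * F j) := map_sum _ _ _
        _ = ∑ j, b j * topHom (f j) := by
            refine Finset.sum_congr rfl (fun j _ => ?_)
            by_cases hji : j < i
            · have hFj : F j = topHom (f j) := by simp only [hF]; rw [if_pos hji]
              rw [hFj, homogeneousComponent_mul_right (c j) (topHom (f j)) (δ j) D (hTf j)]
              by_cases hδ : δ j ≤ D
              · rw [if_pos hδ, hb_def, if_pos (show j < i ∧ δ j ≤ D from ⟨hji, hδ⟩)]
              · rw [if_neg hδ, hb_def, if_neg (show ¬(j < i ∧ δ j ≤ D) by tauto), zero_mul]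
            · have hFj : F j = 0 := by simp only [hF]; rw [if_neg hji]
              rw [hFj, mul_zero, map_zero, hb_def,
                if_neg (show ¬(j < i ∧ δ j ≤ D) by tauto), zero_mul]
    -- the corrected coefficients
    set q' : Fin s → MvPolynomial (Fin n) K :=
      fun j => q j + b j * f i - if j = i then (∑ k, b k * f k) else 0 with hq'
    have hq'_def : ∀ j, q' j = q j + b j * f i -
        (if j = i then (∑ k, b k * f k) else 0) := fun j => rfl
    have hq'_ne : ∀ j, j ≠ i → q' j = q j + b j * f i := by
      intro j hj; rw [hq'_def, if_neg hj, sub_zero]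
    have hq'_i : q' i = q i - ∑ k, b k * f k := by
      rw [hq'_def, if_pos rfl, hbi, zero_mul, add_zero]
    have hq'_gt : ∀ j, i < j → q' j = q j := by
      intro j hj
      rw [hq'_ne j (by intro hcon; rw [hcon] at hj; exact lt_irrefl i hj),
        hb_zero j (by intro hcon; exact absurd (hcon.1.trans hj) (lt_irrefl j)), zero_mul, add_zero]
    -- the sum is preserved
    have hw' : w = ∑ j, q' j * f j := by
      have expand : ∀ j, q' j * f j = q j * f j + (b j * f j) * f i -
          (if j = i then (∑ k, b k * f k) * f i else 0) := by
        intro j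
        rw [hq'_def, sub_mul, add_mul]
        congr 1
        · ring
        · by_cases hji : j = i
          · rw [if_pos hji, if_pos hji, hji]
          · rw [if_neg hji, if_neg hji, zero_mul]
      calc w = ∑ j, q j * f j := hw
        _ = ∑ j, (q j * f j + (b j * f j) * f i -
            (if j = i then (∑ k, b k * f k) * f i else 0)) := by
          rw [Finset.sum_sub_distrib, Finset.sum_add_distrib, ← Finset.sum_mul,
            Finset.sum_ite_eq' Finset.univ i (fun _ => (∑ k, b k * f k) * f i),
            if_pos (Finset.mem_univ i)]
          ring
        _ = ∑ j, q' j * f j := Finset.sum_congr rfl (fun j _ => (expand j).symm)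
    -- degree bound for b j * f i
    have hbf : ∀ j, b j * f i = 0 ∨ (b j * f i).totalDegree + δ j ≤ d := by
      intro j
      by_cases h : j < i ∧ δ j ≤ D
      · right
        have h1 : (b j * f i).totalDegree ≤ (b j).totalDegree + δ i := by
          have := totalDegree_mul (b j) (f i)
          rw [hdeg i] at this; exact this
        have h2 := hb_deg j
        omega
      · left; rw [hb_zero j h, zero_mul]
    -- strictness at i
    have hstrict_i : q' i = 0 ∨ (q' i).totalDegree + δ i < d := by
      have hdecomp : q' i = (q i - topHom (q i)) - ∑ k, b k * (f k - topHom (f k)) := by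
        rw [hq'_i]
        have : ∑ k, b k * (f k - topHom (f k)) =
            (∑ k, b k * f k) - ∑ k, b k * topHom (f k) := by
          rw [← Finset.sum_sub_distrib]
          exact Finset.sum_congr rfl (fun k _ => by ring)
        rw [this, ← claim5]
        ring
      have hd1 : q i - topHom (q i) = 0 ∨ (q i - topHom (q i)).totalDegree < D := by
        rw [topHom]; exact hqiD ▸ sub_top_dlt (q i)
      have hd2 : ∀ k, b k * (f k - topHom (f k)) = 0 ∨
          (b k * (f k - topHom (f k))).totalDegree < D := by
        intro k
        by_cases h : k < i ∧ δ k ≤ D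
        · have := dlt_mul_le (b k) (f k - topHom (f k)) (D - δ k) (δ k)
            (hb_deg k) (hTfsub k)
          rcases this with h0 | hlt
          · exact Or.inl h0
          · exact Or.inr (by omega)
        · left; rw [hb_zero k h, zero_mul]
      have : q' i = 0 ∨ (q' i).totalDegree < D := by
        rw [hdecomp]
        exact dlt_sub _ _ D hd1 (dlt_sum Finset.univ _ D (fun k _ => hd2 k))
      rcases this with h0 | hlt
      · exact Or.inl h0
      · exact Or.inr (by omega)
    -- bounds for all j
    have hq'_bound : ∀ j, q' j = 0 ∨ (q' j).totalDegree + δ j ≤ d := by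
      intro j
      by_cases hji : j = i
      · rw [hji]
        rcases hstrict_i with h0 | hlt
        · exact Or.inl h0
        · exact Or.inr (by omega)
      · rw [hq'_ne j hji]
        rw [dleδ_iff]
        intro mm hmm
        rw [coeff_add]
        rw [(dleδ_iff (q j) (δ j) d).mp (hq j) mm hmm,
          (dleδ_iff (b j * f i) (δ j) d).mp (hbf j) mm hmm, add_zero]
    -- strictness above m
    have hstrict' : ∀ j : Fin s, m ≤ (j : ℕ) → q' j = 0 ∨ (q' j).totalDegree + δ j < d := by
      intro j hj
      rcases eq_or_lt_of_le hj with h | h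
      · have : j = i := Fin.ext h.symm
        rw [this]; exact hstrict_i
      · have hij : i < j := by
          rw [Fin.lt_def]; omega
        rw [hq'_gt j hij]
        exact hstrict j h
    exact IH q' hw' hq'_bound hstrict'
end StmtAux

/-- If the top-degree components of `f₁,…,f_s` form a regular sequence,
`w = q₁f₁+⋯+q_sf_s` with `deg w < d` and `deg qᵢ ≤ d − δᵢ` for all `i`, then
`w = h₁f₁+⋯+h_sf_s` with `deg hᵢ < d − δᵢ`. -/
theorem stmt_2 {K : Type*} [Field K] {n s : ℕ}
    (f : Fin s → MvPolynomial (Fin n) K) (δ : Fin s → ℕ)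
    (hf0 : ∀ i, f i ≠ 0) (hdeg : ∀ i, (f i).totalDegree = δ i)
    (hreg : ∀ i : Fin s, ∀ g : MvPolynomial (Fin n) K,
      g * topHom (f i) ∈ Ideal.span {p | ∃ j : Fin s, j < i ∧ p = topHom (f j)} →
      g ∈ Ideal.span {p | ∃ j : Fin s, j < i ∧ p = topHom (f j)})
    (d : ℕ) (w : MvPolynomial (Fin n) K) (q : Fin s → MvPolynomial (Fin n) K)
    (hw : w = ∑ i, q i * f i)
    (hwd : w = 0 ∨ w.totalDegree < d)
    (hq : ∀ i, q i = 0 ∨ (q i).totalDegree + δ i ≤ d) :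
    ∃ h : Fin s → MvPolynomial (Fin n) K,
      w = ∑ i, h i * f i ∧ ∀ i, h i = 0 ∨ (h i).totalDegree + δ i < d := by
  exact StmtAux.main_aux f δ hf0 hdeg hreg d w hwd s q hw hq
    (fun j hj => absurd j.isLt (by omega))
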